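/- Let α ∈ ℝ, α ≠ 1, and set β = 2/(1−α). Let X be a compact topological space with a nonzero finite Borel measure λ, and let f, f̄ : X → (0,∞) be continuous with ∫_X f^{β} dλ = ∫_X f̄^{β} dλ and f ≠ f̄; set ξ = f̄ − f. Then the maximal solution τ : [0, T_max) → ℝ of the initial value problem τ''(t) = 2 · ( ∫_X (f + τ(t)ξ)^{β−1} ξ dλ / ∫_X (f + τ(t)ξ)^{β} dλ ) · τ'(t)², τ(0) = 0, τ'(0) = 1 (well-defined as long as f + τ(t)ξ > 0 on X) is strictly increasing, and there exists a finite time T ∈ (0, T_max) with τ(T) = 1. Consequently, via the projected-line formula γ(t,x) = (2/|1−α|)(f(x)+τ(t)ξ(x)) / (∫_X (f+τ(t)ξ)^{β} dλ)^{1/β}, any two points of the constraint surface S_α are joined by a geodesic of the radially projected connection; i.e. the space of probability densities is geodesically convex for the α-connection. -/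

import Mathlib

open MeasureTheory Set Filter Metric Topology Real

set_option linter.unusedSectionVars false

section Aux

variable {X : Type*} [TopologicalSpace X] [CompactSpace X] [Nonempty X]
  [MeasurableSpace X] [BorelSpace X]
  {lam : Measure X} [IsFiniteMeasure lam] {f ξ g : X → ℝ}

lemma aux_abs_bound (hg : Continuous g) : ∃ C : ℝ, 0 ≤ C ∧ ∀ x, |g x| ≤ C := by
  obtain ⟨x₀, -, hx₀⟩ := isCompact_univ.exists_isMaxOn univ_nonempty hg.abs.continuousOn
  exact ⟨|g x₀|, abs_nonneg _, fun x => hx₀ (mem_univ x)⟩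

lemma aux_integrable (hg : Continuous g) : Integrable g lam := by
  obtain ⟨C, -, hC⟩ := aux_abs_bound hg
  exact (integrable_const C).mono' hg.aestronglyMeasurable
    (ae_of_all _ fun x => by simpa using hC x)

lemma aux_bounds (hf : Continuous f) (hξ : Continuous ξ) {u v : ℝ} (huv : u ≤ v)
    (hpos : ∀ y ∈ Icc u v, ∀ x, 0 < f x + y * ξ x) :
    ∃ m M : ℝ, 0 < m ∧ ∀ y ∈ Icc u v, ∀ x, f x + y * ξ x ∈ Icc m M := by
  have hcomp : IsCompact ((Icc u v) ×ˢ (univ : Set X)) :=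
    (isCompact_Icc).prod isCompact_univ
  have hne : ((Icc u v) ×ˢ (univ : Set X)).Nonempty :=
    (nonempty_Icc.2 huv).prod univ_nonempty
  have hcont : Continuous fun p : ℝ × X => f p.2 + p.1 * ξ p.2 := by fun_prop
  obtain ⟨⟨y₁, x₁⟩, hmem₁, h₁⟩ := hcomp.exists_isMinOn hne hcont.continuousOn
  obtain ⟨⟨y₂, x₂⟩, hmem₂, h₂⟩ := hcomp.exists_isMaxOn hne hcont.continuousOn
  refine ⟨f x₁ + y₁ * ξ x₁, f x₂ + y₂ * ξ x₂, hpos _ hmem₁.1 x₁, fun y hy x => ?_⟩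
  exact ⟨h₁ (show (y, x) ∈ Icc u v ×ˢ univ from ⟨hy, mem_univ x⟩),
    h₂ (show (y, x) ∈ Icc u v ×ˢ univ from ⟨hy, mem_univ x⟩)⟩

lemma aux_rpow_mem {m M z p : ℝ} (hm : 0 < m) (hz : z ∈ Icc m M) :
    z ^ p ∈ Icc (min (m ^ p) (M ^ p)) (max (m ^ p) (M ^ p)) := by
  rcases le_or_gt 0 p with hp | hp
  · exact ⟨le_trans (min_le_left _ _) (Real.rpow_le_rpow hm.le hz.1 hp),
      le_trans (Real.rpow_le_rpow (hm.trans_le hz.1).le hz.2 hp) (le_max_right _ _)⟩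
  · exact ⟨le_trans (min_le_right _ _)
      (Real.rpow_le_rpow_of_nonpos (hm.trans_le hz.1) hz.2 hp.le),
      le_trans (Real.rpow_le_rpow_of_nonpos hm hz.1 hp.le) (le_max_left _ _)⟩

lemma aux_rpow_pos {z p : ℝ} (hz : 0 < z) : 0 < z ^ p := Real.rpow_pos_of_pos hz p

/-- Differentiation under the integral sign for `u ↦ ∫ (f+uξ)^p g`. -/
lemma aux_hasDerivAt_int (hf : Continuous f) (hξ : Continuous ξ) (hg : Continuous g)
    (p : ℝ) {y ε : ℝ} (hε : 0 < ε)
    (hpos : ∀ u ∈ Icc (y - ε) (y + ε), ∀ x, 0 < f x + u * ξ x) :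
    HasDerivAt (fun u => ∫ x, (f x + u * ξ x) ^ p * g x ∂lam)
      (p * ∫ x, (f x + y * ξ x) ^ (p - 1) * (ξ x * g x) ∂lam) y := by
  obtain ⟨m, M, hm, hmM⟩ := aux_bounds hf hξ (by linarith) hpos
  obtain ⟨Cξ, hCξ0, hCξ⟩ := aux_abs_bound hξ
  obtain ⟨Cg, hCg0, hCg⟩ := aux_abs_bound hg
  have hball : ball y ε ⊆ Icc (y - ε) (y + ε) := by
    intro u hu
    rw [Real.ball_eq_Ioo] at hu
    exact Ioo_subset_Icc_self hu
  have hposy : ∀ x, 0 < f x + y * ξ x :=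
    hpos y ⟨by linarith, by linarith⟩
  have hcont_int : ∀ u, (∀ x, 0 < f x + u * ξ x) →
      Continuous fun x => (f x + u * ξ x) ^ p * g x := by
    intro u hu
    exact ((hf.add (continuous_const.mul hξ)).rpow_const
      (fun x => Or.inl (hu x).ne')).mul hg
  set F' : ℝ → X → ℝ := fun u x => p * (f x + u * ξ x) ^ (p - 1) * ξ x * g x with hF'
  have key := hasDerivAt_integral_of_dominated_loc_of_deriv_le (μ := lam)
    (F := fun u => fun x => (f x + u * ξ x) ^ p * g x) (x₀ := y)
    (bound := fun _ => |p| * max (m ^ (p - 1)) (M ^ (p - 1)) * Cξ * Cg)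
    (F' := F') (ball_mem_nhds y hε) ?_ ?_ ?_ ?_ ?_ ?_
  · have : (∫ x, F' y x ∂lam) = p * ∫ x, (f x + y * ξ x) ^ (p - 1) * (ξ x * g x) ∂lam := by
      rw [← integral_const_mul]
      congr 1
      ext x
      simp only [hF']
      ring
    rw [← this]
    exact key.2
  · filter_upwards [ball_mem_nhds y hε] with u hu
    exact (hcont_int u (hpos u (hball hu))).aestronglyMeasurable
  · exact aux_integrable (hcont_int y hposy)
  · exact (((continuous_const.mul ((hf.add (continuous_const.mul hξ)).rpow_const
      (fun x => Or.inl (hposy x).ne'))).mul hξ).mul hg).aestronglyMeasurable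
  · refine ae_of_all _ fun x u hu => ?_
    have hb := hmM u (hball hu) x
    have hb' := aux_rpow_mem (p := p - 1) hm hb
    have h1 : 0 < f x + u * ξ x := hpos u (hball hu) x
    have h2 : |(f x + u * ξ x) ^ (p - 1)| ≤ max (m ^ (p - 1)) (M ^ (p - 1)) := by
      rw [abs_of_pos (aux_rpow_pos h1)]
      exact hb'.2
    calc ‖F' u x‖ = |p| * |(f x + u * ξ x) ^ (p - 1)| * |ξ x| * |g x| := by
          simp [hF', abs_mul]
    _ ≤ |p| * max (m ^ (p - 1)) (M ^ (p - 1)) * Cξ * Cg := by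
          have h3 : |p| * |(f x + u * ξ x) ^ (p - 1)| ≤
              |p| * max (m ^ (p - 1)) (M ^ (p - 1)) :=
            mul_le_mul_of_nonneg_left h2 (abs_nonneg p)
          have h4 : |p| * |(f x + u * ξ x) ^ (p - 1)| * |ξ x| ≤
              |p| * max (m ^ (p - 1)) (M ^ (p - 1)) * Cξ :=
            mul_le_mul h3 (hCξ x) (abs_nonneg _) (by positivity)
          exact mul_le_mul h4 (hCg x) (abs_nonneg _) (by positivity)
  · exact integrable_const _
  · refine ae_of_all _ fun x u hu => ?_
    have h1 : 0 < f x + u * ξ x := hpos u (hball hu) x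
    have hbase : HasDerivAt (fun u : ℝ => f x + u * ξ x) (ξ x) u := by
      simpa using ((hasDerivAt_id u).mul_const (ξ x)).const_add (f x)
    have hrpow : HasDerivAt (fun z : ℝ => z ^ p) (p * (f x + u * ξ x) ^ (p - 1))
        (f x + u * ξ x) := Real.hasDerivAt_rpow_const (Or.inl h1.ne')
    have := (hrpow.comp u hbase).mul_const (g x)
    exact this

end Aux
section Aux2
variable {X : Type*} [TopologicalSpace X] [CompactSpace X] [Nonempty X] [MeasurableSpace X] [BorelSpace X] {lam : Measure X} [IsFiniteMeasure lam] {f ξ g : X → ℝ}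

lemma aux_int_lb (hlam : lam ≠ 0) (hf : Continuous f) (hξ : Continuous ξ) (p : ℝ) {u v : ℝ}
    (huv : u ≤ v) (hpos : ∀ y ∈ Icc u v, ∀ x, 0 < f x + y * ξ x) :
    ∃ c0 : ℝ, 0 < c0 ∧ ∀ y ∈ Icc u v, c0 ≤ ∫ x, (f x + y * ξ x) ^ p ∂lam := by
  obtain ⟨m, M, hm, hmM⟩ := aux_bounds hf hξ huv hpos
  have hmeas : 0 < (lam univ).toReal := by
    refine ENNReal.toReal_pos (fun h => hlam ?_) (measure_ne_top lam univ)
    rwa [← Measure.measure_univ_eq_zero]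
  have hMm : m ≤ M := by
    obtain x := Classical.arbitrary X
    have := hmM u ⟨le_refl u, huv⟩ x
    exact le_trans this.1 this.2
  refine ⟨min (m ^ p) (M ^ p) * (lam univ).toReal,
    mul_pos (lt_min (aux_rpow_pos hm) (aux_rpow_pos (hm.trans_le hMm))) hmeas, fun y hy => ?_⟩
  have hcont : Continuous fun x => (f x + y * ξ x) ^ p :=
    (hf.add (continuous_const.mul hξ)).rpow_const (fun x => Or.inl (hpos y hy x).ne')
  have hint := integral_mono (μ := lam) (integrable_const (min (m ^ p) (M ^ p)))
    (aux_integrable hcont) (fun x => (aux_rpow_mem hm (hmM y hy x)).1)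
  rwa [integral_const, smul_eq_mul, mul_comm] at hint

lemma aux_int_ub (hf : Continuous f) (hξ : Continuous ξ) (hg : Continuous g) (p : ℝ) {u v : ℝ}
    (huv : u ≤ v) (hpos : ∀ y ∈ Icc u v, ∀ x, 0 < f x + y * ξ x) :
    ∃ K : ℝ, ∀ y ∈ Icc u v, |∫ x, (f x + y * ξ x) ^ p * g x ∂lam| ≤ K := by
  obtain ⟨m, M, hm, hmM⟩ := aux_bounds hf hξ huv hpos
  obtain ⟨Cg, hCg0, hCg⟩ := aux_abs_bound hg
  refine ⟨max (m ^ p) (M ^ p) * Cg * (lam univ).toReal, fun y hy => ?_⟩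
  have hcont : Continuous fun x => (f x + y * ξ x) ^ p * g x :=
    ((hf.add (continuous_const.mul hξ)).rpow_const (fun x => Or.inl (hpos y hy x).ne')).mul hg
  calc |∫ x, (f x + y * ξ x) ^ p * g x ∂lam| ≤ ∫ x, |(f x + y * ξ x) ^ p * g x| ∂lam := by
        simpa only [Real.norm_eq_abs] using norm_integral_le_integral_norm
          (μ := lam) (fun x => (f x + y * ξ x) ^ p * g x)
  _ ≤ ∫ _x, max (m ^ p) (M ^ p) * Cg ∂lam := by
        refine integral_mono (aux_integrable hcont.abs) (integrable_const _) (fun x => ?_)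
        rw [abs_mul]
        refine mul_le_mul ?_ (hCg x) (abs_nonneg _)
          (le_trans (aux_rpow_pos hm).le (le_max_left _ _))
        rw [abs_of_pos (aux_rpow_pos (hpos y hy x))]
        exact (aux_rpow_mem hm (hmM y hy x)).2
  _ = max (m ^ p) (M ^ p) * Cg * (lam univ).toReal := by
        rw [integral_const, smul_eq_mul, mul_comm]
        rfl

end Aux2


/-- `IsProjSolution β lam f ξ τ τ' τ'' b` says that `τ` (with derivative data `τ'`, `τ''`)
is a solution on `[0, b)` (with `b ∈ (0,∞]` an extended real) of the initial value problem
`τ'' = 2 (∫ (f+τξ)^{β−1} ξ dλ / ∫ (f+τξ)^β dλ) (τ')²`, `τ(0) = 0`, `τ'(0) = 1`,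
well-defined in the sense that `f + τ(t)ξ > 0` on the domain. -/
def IsProjSolution (β : ℝ) {X : Type*} [MeasurableSpace X] (lam : Measure X)
    (f ξ : X → ℝ) (τ τ' τ'' : ℝ → ℝ) (b : ENNReal) : Prop :=
  τ 0 = 0 ∧ τ' 0 = 1 ∧
  (∀ t ∈ {s : ℝ | 0 ≤ s ∧ ENNReal.ofReal s < b},
    HasDerivWithinAt τ (τ' t) {s : ℝ | 0 ≤ s ∧ ENNReal.ofReal s < b} t) ∧
  (∀ t ∈ {s : ℝ | 0 ≤ s ∧ ENNReal.ofReal s < b},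
    HasDerivWithinAt τ' (τ'' t) {s : ℝ | 0 ≤ s ∧ ENNReal.ofReal s < b} t) ∧
  ContinuousOn τ'' {s : ℝ | 0 ≤ s ∧ ENNReal.ofReal s < b} ∧
  (∀ t, 0 ≤ t → ENNReal.ofReal t < b → ∀ x : X, 0 < f x + τ t * ξ x) ∧
  (∀ t, 0 ≤ t → ENNReal.ofReal t < b →
    τ'' t = 2 * ((∫ x, (f x + τ t * ξ x) ^ (β - 1 : ℝ) * ξ x ∂lam)
        / (∫ x, (f x + τ t * ξ x) ^ (β : ℝ) ∂lam)) * (τ' t) ^ 2)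

/-- Geodesic convexity of the constraint surface `S_α` (`α ≠ 1`,
`β = 2/(1−α)`). Given continuous positive `f ≠ f̄` with `∫ f^β dλ = ∫ f̄^β dλ` and
`ξ = f̄ − f`, the maximal solution `τ` on `[0, T_max)` of the initial value problem
`τ'' = 2 (∫ (f+τξ)^{β−1} ξ dλ / ∫ (f+τξ)^β dλ)(τ')²`, `τ(0)=0`, `τ'(0)=1` is strictly
increasing and reaches the value `1` in finite time `T < T_max`; consequently, via the
projected-line formula for geodesics, any two points of `S_α` are joined by a geodesic of
the radially projected connection, i.e. the space of probability densities is geodesically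
convex for the α-connection. -/
theorem stmt19 (α : ℝ) (hα : α ≠ 1) {X : Type*} [TopologicalSpace X] [CompactSpace X]
    [MeasurableSpace X] [BorelSpace X]
    (lam : Measure X) [IsFiniteMeasure lam] (hlam : lam ≠ 0)
    (f fbar : X → ℝ) (hf : Continuous f) (hfbar : Continuous fbar)
    (hfpos : ∀ x, 0 < f x) (hfbarpos : ∀ x, 0 < fbar x)
    (hnorm : ∫ x, f x ^ (2 / (1 - α) : ℝ) ∂lam = ∫ x, fbar x ^ (2 / (1 - α) : ℝ) ∂lam)
    (hne : f ≠ fbar)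
    (τ τ' τ'' : ℝ → ℝ) (b : ENNReal) (hb : 0 < b)
    (hsol : IsProjSolution (2 / (1 - α)) lam f (fun x => fbar x - f x) τ τ' τ'' b)
    (hmax : ∀ (σ σ' σ'' : ℝ → ℝ) (b₂ : ENNReal),
      IsProjSolution (2 / (1 - α)) lam f (fun x => fbar x - f x) σ σ' σ'' b₂ →
      (∀ t : ℝ, 0 ≤ t → ENNReal.ofReal t < b → σ t = τ t) → b₂ ≤ b) :
    StrictMonoOn τ {s : ℝ | 0 ≤ s ∧ ENNReal.ofReal s < b} ∧
    ∃ T : ℝ, 0 < T ∧ ENNReal.ofReal T < b ∧ τ T = 1 := by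
  classical
  have h1α : (1 : ℝ) - α ≠ 0 := sub_ne_zero.2 (Ne.symm hα)
  set β : ℝ := 2 / (1 - α) with hβdef
  have hβ0 : β ≠ 0 := div_ne_zero two_ne_zero h1α
  set ξ : X → ℝ := fun x => fbar x - f x with hξdef
  have hξc : Continuous ξ := hfbar.sub hf
  set S : Set ℝ := {s : ℝ | 0 ≤ s ∧ ENNReal.ofReal s < b} with hSdef
  obtain ⟨hτ0, hτ'0, hdτ, hdτ', hcτ'', hposS, hode⟩ := hsol
  rw [← hSdef] at hdτ hdτ' hcτ''
  have hXne : Nonempty X := by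
    by_contra h
    rw [not_nonempty_iff] at h
    refine hlam (Measure.measure_univ_eq_zero.mp ?_)
    rw [univ_eq_empty_iff.mpr h]
    exact measure_empty
  have h0S : (0 : ℝ) ∈ S := ⟨le_refl 0, by simpa using hb⟩
  have hIccS : ∀ t ∈ S, Icc 0 t ⊆ S := fun t ht s hs =>
    ⟨hs.1, lt_of_le_of_lt (ENNReal.ofReal_le_ofReal hs.2) ht.2⟩
  have hUopen : IsOpen {s : ℝ | ENNReal.ofReal s < b} :=
    isOpen_lt ENNReal.continuous_ofReal continuous_const
  have hnhds : ∀ t ∈ S, 0 < t → S ∈ 𝓝 t := by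
    intro t ht h0
    have h1 : Ioi (0 : ℝ) ∩ {s | ENNReal.ofReal s < b} ∈ 𝓝 t :=
      (isOpen_Ioi.inter hUopen).mem_nhds ⟨h0, ht.2⟩
    exact mem_of_superset h1 (fun s hs => ⟨hs.1.le, hs.2⟩)
  have hconv : Convex ℝ S := by
    have h : S.OrdConnected := ⟨fun x hx y hy z hz =>
      ⟨le_trans hx.1 hz.1, lt_of_le_of_lt (ENNReal.ofReal_le_ofReal hz.2) hy.2⟩⟩
    exact h.convex
  have hcτ : ContinuousOn τ S := fun t ht => (hdτ t ht).continuousWithinAt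
  have hcτ' : ContinuousOn τ' S := fun t ht => (hdτ' t ht).continuousWithinAt
  have hdAτ : ∀ t ∈ S, 0 < t → HasDerivAt τ (τ' t) t :=
    fun t ht h0 => (hdτ t ht).hasDerivAt (hnhds t ht h0)
  have hdAτ' : ∀ t ∈ S, 0 < t → HasDerivAt τ' (τ'' t) t :=
    fun t ht h0 => (hdτ' t ht).hasDerivAt (hnhds t ht h0)
  set Fi : ℝ → ℝ := fun y => ∫ x, (f x + y * ξ x) ^ (β : ℝ) ∂lam with hFidef
  set I1 : ℝ → ℝ := fun y => ∫ x, (f x + y * ξ x) ^ (β - 1 : ℝ) * ξ x ∂lam with hI1def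
  set G : ℝ → ℝ := fun y => 2 * (I1 y / Fi y) with hGdef
  have hopen' : ∀ y : ℝ, (∀ x, 0 < f x + y * ξ x) →
      ∃ ε > 0, ∀ u ∈ Icc (y - ε) (y + ε), ∀ x, 0 < f x + u * ξ x := by
    intro y hy
    obtain ⟨m, M, hm, hmM⟩ := aux_bounds hf hξc (le_refl y) (by
      intro z hz x
      rw [show z = y from le_antisymm hz.2 hz.1]
      exact hy x)
    obtain ⟨Cξ, hCξ0, hCξ⟩ := aux_abs_bound hξc
    refine ⟨m / (Cξ + 1), by positivity, fun u hu x => ?_⟩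
    have h1 : |u - y| ≤ m / (Cξ + 1) := abs_le.2 ⟨by linarith [hu.1], by linarith [hu.2]⟩
    have h2 : |(u - y) * ξ x| ≤ m / (Cξ + 1) * Cξ := by
      rw [abs_mul]
      exact mul_le_mul h1 (hCξ x) (abs_nonneg _) (by positivity)
    have h3 := (hmM y ⟨le_refl y, le_refl y⟩ x).1
    have h4 : m / (Cξ + 1) * Cξ < m := by
      rw [div_mul_eq_mul_div, div_lt_iff₀ (by positivity : (0:ℝ) < Cξ + 1)]
      nlinarith
    have h5 : f x + u * ξ x = f x + y * ξ x + (u - y) * ξ x := by ring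
    have h6 := neg_abs_le ((u - y) * ξ x)
    linarith
  have hsingle : ∀ y : ℝ, (∀ x, 0 < f x + y * ξ x) →
      ∀ z ∈ Icc y y, ∀ x, 0 < f x + z * ξ x := by
    intro y hy z hz x
    rw [show z = y from le_antisymm hz.2 hz.1]
    exact hy x
  have hFipos : ∀ y : ℝ, (∀ x, 0 < f x + y * ξ x) → 0 < Fi y := by
    intro y hy
    obtain ⟨c0, hc0, hc0'⟩ := aux_int_lb hlam hf hξc β (le_refl y) (hsingle y hy)
    calc (0 : ℝ) < c0 := hc0
    _ ≤ Fi y := hc0' y ⟨le_refl y, le_refl y⟩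
  have hFid : ∀ y : ℝ, (∀ x, 0 < f x + y * ξ x) → HasDerivAt Fi (β * I1 y) y := by
    intro y hy
    obtain ⟨ε, hε, hpos'⟩ := hopen' y hy
    have h := aux_hasDerivAt_int (lam := lam) hf hξc
      (continuous_const : Continuous fun _ : X => (1 : ℝ)) β hε hpos'
    simpa only [mul_one, hFidef, hI1def] using h
  have hI1d : ∀ y : ℝ, (∀ x, 0 < f x + y * ξ x) → HasDerivAt I1
      ((β - 1) * ∫ x, (f x + y * ξ x) ^ (β - 1 - 1 : ℝ) * (ξ x * ξ x) ∂lam) y := by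
    intro y hy
    obtain ⟨ε, hε, hpos'⟩ := hopen' y hy
    have h := aux_hasDerivAt_int (lam := lam) hf hξc hξc (β - 1) hε hpos'
    simpa only [hI1def] using h
  have hτpos' : ∀ t ∈ S, ∀ x, 0 < f x + τ t * ξ x := fun t ht => hposS t ht.1 ht.2
  have hode' : ∀ s ∈ S, τ'' s = G (τ s) * τ' s ^ 2 := by
    intro s hs
    rw [hode s hs.1 hs.2]
  set ψ : ℝ → ℝ := fun t => (Fi (τ t) / Fi 0) ^ (1 - α : ℝ) with hψdef
  have hpos0 : ∀ x, 0 < f x + (0 : ℝ) * ξ x := by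
    intro x
    have h := hposS 0 h0S.1 h0S.2 x
    rwa [hτ0] at h
  have hFi0 : 0 < Fi 0 := hFipos 0 hpos0
  have hψ0 : ψ 0 = 1 := by
    simp only [hψdef]
    rw [hτ0, div_self hFi0.ne', Real.one_rpow]
  have hchain : ∀ t ∈ S, HasDerivWithinAt ψ (G (τ t) * τ' t * ψ t) S t := by
    intro t ht
    have hy := hτpos' t ht
    have hFiy := hFipos _ hy
    have hr : 0 < Fi (τ t) / Fi 0 := div_pos hFiy hFi0
    have h1 : HasDerivAt (fun z => Fi z / Fi 0) (β * I1 (τ t) / Fi 0) (τ t) :=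
      (hFid _ hy).div_const _
    have h2 : HasDerivAt (fun w : ℝ => w ^ (1 - α : ℝ))
        ((1 - α) * (Fi (τ t) / Fi 0) ^ (1 - α - 1 : ℝ)) (Fi (τ t) / Fi 0) :=
      Real.hasDerivAt_rpow_const (Or.inl hr.ne')
    have h3 := (h2.comp (τ t) h1).comp_hasDerivWithinAt t (hdτ t ht)
    refine h3.congr_deriv ?_
    symm
    rw [show (1 - α - 1 : ℝ) = 1 - α - 1 from rfl, Real.rpow_sub hr, Real.rpow_one]
    simp only [hGdef, hψdef, hβdef]
    field_simp
  have hcψ : ContinuousOn ψ S := fun t ht => (hchain t ht).continuousWithinAt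
  have hfirst : ∀ t ∈ S, τ' t = ψ t := by
    intro t₀ ht₀
    have hIccsub : Icc 0 t₀ ⊆ S := hIccS t₀ ht₀
    have hIccne : (Icc (0:ℝ) t₀).Nonempty := nonempty_Icc.2 ht₀.1
    obtain ⟨s₁, hs₁mem, hs₁⟩ := isCompact_Icc.exists_isMinOn hIccne (hcτ.mono hIccsub)
    obtain ⟨s₂, hs₂mem, hs₂⟩ := isCompact_Icc.exists_isMaxOn hIccne (hcτ.mono hIccsub)
    have hAB : τ s₁ ≤ τ s₂ := hs₁ hs₂mem
    have hposAB : ∀ y ∈ Icc (τ s₁) (τ s₂), ∀ x, 0 < f x + y * ξ x := by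
      intro y hy x
      have hsub2 : uIcc s₁ s₂ ⊆ Icc 0 t₀ := uIcc_subset_Icc hs₁mem hs₂mem
      have him := intermediate_value_uIcc (hcτ.mono (hsub2.trans hIccsub))
      have hy' : y ∈ uIcc (τ s₁) (τ s₂) := by rw [uIcc_of_le hAB]; exact hy
      obtain ⟨s, hs, rfl⟩ := him hy'
      exact hτpos' s (hIccsub (hsub2 hs)) x
    obtain ⟨K₁, hK₁⟩ := aux_int_ub (lam := lam) hf hξc hξc (β - 1) hAB hposAB
    have hK₁0 : 0 ≤ K₁ := (abs_nonneg _).trans (hK₁ (τ s₁) ⟨le_refl _, hAB⟩)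
    obtain ⟨c0, hc0, hc0'⟩ := aux_int_lb hlam hf hξc β hAB hposAB
    obtain ⟨s₃, hs₃mem, hs₃⟩ := isCompact_Icc.exists_isMaxOn hIccne (hcτ'.mono hIccsub).abs
    set K : ℝ := 2 * K₁ / c0 * |τ' s₃| with hKdef
    have hGbd : ∀ s ∈ Icc 0 t₀, |G (τ s) * τ' s| ≤ K := by
      intro s hs
      have hmem : τ s ∈ Icc (τ s₁) (τ s₂) := ⟨hs₁ hs, hs₂ hs⟩
      have h1 : |I1 (τ s)| ≤ K₁ := by
        have h := hK₁ (τ s) hmem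
        simpa only [hI1def] using h
      have h2 : c0 ≤ Fi (τ s) := by
        have h := hc0' (τ s) hmem
        simpa only [hFidef] using h
      have hFis : 0 < Fi (τ s) := lt_of_lt_of_le hc0 h2
      have h3 : |G (τ s)| ≤ 2 * K₁ / c0 := by
        simp only [hGdef]
        rw [abs_mul, abs_div, abs_two, abs_of_pos hFis, mul_div_assoc]
        exact mul_le_mul_of_nonneg_left
          (div_le_div₀ hK₁0 h1 hc0 h2) (by norm_num)
      calc |G (τ s) * τ' s| = |G (τ s)| * |τ' s| := abs_mul _ _
      _ ≤ 2 * K₁ / c0 * |τ' s₃| :=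
          mul_le_mul h3 (hs₃ hs) (abs_nonneg _) (div_nonneg (by linarith) hc0.le)
    set w : ℝ → ℝ := fun s => τ' s - ψ s with hwdef
    have hw0 : w 0 = 0 := by simp [hwdef, hτ'0, hψ0]
    have hwd : ∀ s ∈ Ico 0 t₀, HasDerivWithinAt w (G (τ s) * τ' s * w s) (Ici s) s := by
      intro s hs
      have hsS : s ∈ S := hIccsub ⟨hs.1, hs.2.le⟩
      have h1 : HasDerivWithinAt w (τ'' s - G (τ s) * τ' s * ψ s) S s :=
        (hdτ' s hsS).sub (hchain s hsS)
      have h2 : τ'' s - G (τ s) * τ' s * ψ s = G (τ s) * τ' s * w s := by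
        rw [hode' s hsS]; simp only [hwdef]; ring
      rw [h2] at h1
      refine h1.mono_of_mem_nhdsWithin ?_
      rw [mem_nhdsWithin]
      exact ⟨{u | ENNReal.ofReal u < b}, hUopen, hsS.2,
        fun u hu => ⟨le_trans hsS.1 hu.2, hu.1⟩⟩
    have hwcont : ContinuousOn w (Icc 0 t₀) := ((hcτ'.sub hcψ).mono hIccsub)
    have hgron := norm_le_gronwallBound_of_norm_deriv_right_le (δ := 0) (ε := 0)
      hwcont hwd (by simp [hw0]) (fun s hs => by
        rw [Real.norm_eq_abs, Real.norm_eq_abs, abs_mul, add_zero]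
        exact mul_le_mul_of_nonneg_right (hGbd s ⟨hs.1, hs.2.le⟩) (abs_nonneg _))
    have hwt₀ := hgron t₀ ⟨ht₀.1, le_refl t₀⟩
    rw [gronwallBound_ε0_δ0, Real.norm_eq_abs] at hwt₀
    have : w t₀ = 0 := abs_eq_zero.mp (le_antisymm hwt₀ (abs_nonneg _))
    have h := sub_eq_zero.mp this
    exact h
  have hψpos : ∀ t ∈ S, 0 < ψ t := fun t ht =>
    Real.rpow_pos_of_pos (div_pos (hFipos _ (hτpos' t ht)) hFi0) _
  have hτ'pos : ∀ t ∈ S, 0 < τ' t := fun t ht => (hfirst t ht) ▸ hψpos t ht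
  have hsm : StrictMonoOn τ S := by
    refine strictMonoOn_of_deriv_pos hconv hcτ (fun x hx => ?_)
    have hxS : x ∈ S := interior_subset hx
    have hxn : S ∈ 𝓝 x := mem_interior_iff_mem_nhds.1 hx
    have hd : HasDerivAt τ (τ' x) x := (hdτ x hxS).hasDerivAt hxn
    rw [hd.deriv]
    exact hτ'pos x hxS
  refine ⟨hsm, ?_⟩
  by_cases hreach : ∃ t ∈ S, 1 ≤ τ t
  · obtain ⟨t₁, ht₁, hτt₁⟩ := hreach
    have hcont1 : ContinuousOn τ (Icc 0 t₁) := hcτ.mono (hIccS t₁ ht₁)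
    have hIVT := intermediate_value_Icc ht₁.1 hcont1
    have h1mem : (1 : ℝ) ∈ Icc (τ 0) (τ t₁) := ⟨by rw [hτ0]; norm_num, hτt₁⟩
    obtain ⟨T, hTmem, hT⟩ := hIVT h1mem
    have hT0 : 0 < T := by
      rcases eq_or_lt_of_le hTmem.1 with h | h
      · exfalso
        rw [← h, hτ0] at hT
        norm_num at hT
      · exact h
    exact ⟨T, hT0, lt_of_le_of_lt (ENNReal.ofReal_le_ofReal hTmem.2) ht₁.2, hT⟩
  · push_neg at hreach
    exfalso
    have hτmem : ∀ t ∈ S, τ t ∈ Icc 0 1 := by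
      intro t ht
      refine ⟨?_, (hreach t ht).le⟩
      rcases eq_or_lt_of_le ht.1 with h | h
      · rw [← h, hτ0]
      · have h2 := hsm h0S ht h
        rw [hτ0] at h2
        exact h2.le
    have hpos01 : ∀ y ∈ Icc (0 : ℝ) 1, ∀ x, 0 < f x + y * ξ x := by
      intro y hy x
      have h1 : 0 < min (f x) (fbar x) := lt_min (hfpos x) (hfbarpos x)
      have h2 : (1 - y) * min (f x) (fbar x) ≤ (1 - y) * f x :=
        mul_le_mul_of_nonneg_left (min_le_left _ _) (by linarith [hy.2])
      have h3 : y * min (f x) (fbar x) ≤ y * fbar x :=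
        mul_le_mul_of_nonneg_left (min_le_right _ _) hy.1
      have h4 : f x + y * ξ x = (1 - y) * f x + y * fbar x := by
        simp only [hξdef]; ring
      nlinarith
    obtain ⟨c1, hc1, hc1'⟩ := aux_int_lb hlam hf hξc β zero_le_one hpos01
    obtain ⟨C1, hC1⟩ := aux_int_ub (lam := lam) hf hξc
      (continuous_const : Continuous fun _ : X => (1 : ℝ)) β zero_le_one hpos01
    have hFiIcc : ∀ y ∈ Icc (0 : ℝ) 1, Fi y ∈ Icc c1 C1 := by
      intro y hy
      constructor
      · have h := hc1' y hy
        simpa only [hFidef] using h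
      · have h := hC1 y hy
        simp only [mul_one] at h
        have h2 : Fi y ≤ |∫ x, (f x + y * ξ x) ^ (β : ℝ) ∂lam| := le_abs_self _
        exact h2.trans h
    have hC1pos : 0 < C1 := by
      have h1 := hFiIcc 0 ⟨le_refl 0, zero_le_one⟩
      linarith [h1.1, h1.2]
    set δ : ℝ := min ((c1 / Fi 0) ^ (1 - α : ℝ)) ((C1 / Fi 0) ^ (1 - α : ℝ)) with hδdef
    have hδ0 : 0 < δ :=
      lt_min (aux_rpow_pos (div_pos hc1 hFi0)) (aux_rpow_pos (div_pos hC1pos hFi0))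
    have hψδ : ∀ t ∈ S, δ ≤ τ' t := by
      intro t ht
      rw [hfirst t ht]
      have hFit := hFiIcc (τ t) (hτmem t ht)
      have hmem2 : Fi (τ t) / Fi 0 ∈ Icc (c1 / Fi 0) (C1 / Fi 0) := by
        constructor
        · gcongr
          exact hFit.1
        · gcongr
          exact hFit.2
      exact (aux_rpow_mem (div_pos hc1 hFi0) hmem2).1
    have hgrow : ∀ t ∈ S, δ * t ≤ τ t := by
      intro t ht
      have hmono : MonotoneOn (fun s => τ s - δ * s) S := by
        refine monotoneOn_of_deriv_nonneg hconv
          (hcτ.sub ((continuous_const.mul continuous_id).continuousOn)) ?_ ?_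
        · intro x hx
          exact (((hdτ x (interior_subset hx)).hasDerivAt
            (mem_interior_iff_mem_nhds.1 hx)).sub
            ((hasDerivAt_id x).const_mul δ)).differentiableAt.differentiableWithinAt
        · intro x hx
          have hxS : x ∈ S := interior_subset hx
          have hd : HasDerivAt (fun s => τ s - δ * s) (τ' x - δ * 1) x :=
            ((hdτ x hxS).hasDerivAt (mem_interior_iff_mem_nhds.1 hx)).sub
              ((hasDerivAt_id x).const_mul δ)
          rw [hd.deriv]
          have := hψδ x hxS
          linarith
      have h1 := hmono h0S ht ht.1
      simp only [hτ0] at h1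
      linarith
    by_cases hbtop : b = ⊤
    · have htS : (2 / δ) ∈ S := ⟨by positivity, by simp [hbtop]⟩
      have h1 := hgrow _ htS
      rw [mul_comm, div_mul_cancel₀ _ hδ0.ne'] at h1
      have h2 := hreach _ htS
      linarith
    · -- b finite: extend the solution beyond c = b.toReal, contradicting maximality
      set c : ℝ := b.toReal with hcdef
      have hc : 0 < c := ENNReal.toReal_pos hb.ne' hbtop
      have hSIco : S = Ico 0 c := by
        ext s
        exact ⟨fun hs => ⟨hs.1, (ENNReal.ofReal_lt_iff_lt_toReal hs.1 hbtop).1 hs.2⟩,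
          fun hs => ⟨hs.1, (ENNReal.ofReal_lt_iff_lt_toReal hs.1 hbtop).2 hs.2⟩⟩
      have hIooS : Ioo 0 c ⊆ S := by rw [hSIco]; exact Ioo_subset_Ico_self
      have hmonoIoo : MonotoneOn τ (Ioo 0 c) := by
        refine hsm.monotoneOn.mono ?_
        rw [hSIco]
        exact Ioo_subset_Ico_self
      have hIoone : (Ioo (0 : ℝ) c).Nonempty := ⟨c / 2, by constructor <;> linarith⟩
      have hbdd : BddAbove (τ '' Ioo 0 c) := ⟨1, by
        rintro y ⟨s, hs, rfl⟩
        exact (hreach s (hIooS hs)).le⟩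
      set τc : ℝ := sSup (τ '' Ioo 0 c) with hτcdef
      have htend : Tendsto τ (𝓝[<] c) (𝓝 τc) :=
        MonotoneOn.tendsto_nhdsWithin_Ioo_left hIoone hmonoIoo hbdd
      have hτc01 : τc ∈ Icc (0 : ℝ) 1 := by
        constructor
        · have h1 : τ (c / 2) ≤ τc :=
            le_csSup hbdd ⟨c / 2, ⟨by linarith, by linarith⟩, rfl⟩
          have h2 := (hτmem (c / 2) (hIooS ⟨by linarith, by linarith⟩)).1
          linarith
        · exact csSup_le (hIoone.image τ)
            (by rintro y ⟨s, hs, rfl⟩; exact (hreach s (hIooS hs)).le)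
      have hposτc : ∀ x, 0 < f x + τc * ξ x := hpos01 τc hτc01
      set Lc : ℝ := (Fi τc / Fi 0) ^ (1 - α : ℝ) with hLcdef
      have hFiτc : 0 < Fi τc := hFipos τc hposτc
      have hψcontc : ContinuousAt (fun y => (Fi y / Fi 0) ^ (1 - α : ℝ)) τc := by
        have h1 : ContinuousAt (fun y => Fi y / Fi 0) τc :=
          ((hFid τc hposτc).continuousAt).div_const _
        have h2 : ContinuousAt (fun z : ℝ => z ^ (1 - α : ℝ)) (Fi τc / Fi 0) :=
          Real.continuousAt_rpow_const _ _ (Or.inl (div_pos hFiτc hFi0).ne')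
        exact ContinuousAt.comp (g := fun z : ℝ => z ^ (1 - α : ℝ))
          (f := fun y => Fi y / Fi 0) h2 h1
      have hIooev : Ioo (0 : ℝ) c ∈ 𝓝[<] c := Ioo_mem_nhdsLT hc
      have htendτ' : Tendsto τ' (𝓝[<] c) (𝓝 Lc) := by
        refine Tendsto.congr' ?_ (hψcontc.tendsto.comp htend)
        filter_upwards [hIooev] with t ht
        exact (hfirst t (hIooS ht)).symm
      have hGcontc : ContinuousAt G τc := by
        have h1 : ContinuousAt (fun y => I1 y / Fi y) τc :=
          ((hI1d τc hposτc).continuousAt).div ((hFid τc hposτc).continuousAt) hFiτc.ne'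
        exact continuousAt_const.mul h1
      set Ac : ℝ := G τc * Lc ^ 2 with hAcdef
      have htendτ'' : Tendsto τ'' (𝓝[<] c) (𝓝 Ac) := by
        have h1 : Tendsto (fun t => G (τ t) * τ' t ^ 2) (𝓝[<] c) (𝓝 (G τc * Lc ^ 2)) :=
          (hGcontc.tendsto.comp htend).mul (htendτ'.pow 2)
        refine Tendsto.congr' ?_ h1
        filter_upwards [hIooev] with t ht
        exact (hode' t (hIooS ht)).symm
      -- the vector field is C¹ near (τc, Lc)
      obtain ⟨ε₁, hε₁, hpos₁⟩ := hopen' τc hposτc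
      set O : Set ℝ := Ioo (τc - ε₁) (τc + ε₁) with hOdef
      have hOopen : IsOpen O := isOpen_Ioo
      have hτcO : τc ∈ O := ⟨by linarith, by linarith⟩
      have hOpos : ∀ y ∈ O, ∀ x, 0 < f x + y * ξ x := fun y hy =>
        hpos₁ y ⟨hy.1.le, hy.2.le⟩
      have hI1cd : ContDiffOn ℝ 1 I1 O := by
        rw [show (1 : WithTop ℕ∞) = 0 + 1 by norm_num,
          contDiffOn_succ_iff_deriv_of_isOpen hOopen]
        refine ⟨fun y hy =>
          ((hI1d y (hOpos y hy)).differentiableAt).differentiableWithinAt, by simp, ?_⟩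
        rw [contDiffOn_zero]
        have hJ : ContinuousOn (fun y => (β - 1) *
            ∫ x, (f x + y * ξ x) ^ (β - 1 - 1 : ℝ) * (ξ x * ξ x) ∂lam) O := by
          refine continuousOn_const.mul (fun y hy => ?_)
          obtain ⟨ε₂, hε₂, hpos₂⟩ := hopen' y (hOpos y hy)
          exact (aux_hasDerivAt_int (lam := lam) hf hξc (hξc.mul hξc) (β - 1 - 1) hε₂
            hpos₂).continuousAt.continuousWithinAt
        exact hJ.congr (fun y hy => (hI1d y (hOpos y hy)).deriv)
      have hFicd : ContDiffOn ℝ 1 Fi O := by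
        rw [show (1 : WithTop ℕ∞) = 0 + 1 by norm_num,
          contDiffOn_succ_iff_deriv_of_isOpen hOopen]
        refine ⟨fun y hy =>
          ((hFid y (hOpos y hy)).differentiableAt).differentiableWithinAt, by simp, ?_⟩
        rw [contDiffOn_zero]
        have hJ : ContinuousOn (fun y => β * I1 y) O :=
          continuousOn_const.mul
            (fun y hy => (hI1d y (hOpos y hy)).continuousAt.continuousWithinAt)
        exact hJ.congr (fun y hy => (hFid y (hOpos y hy)).deriv)
      have hOnhds : O ∈ 𝓝 τc := hOopen.mem_nhds hτcO
      have hGcd : ContDiffAt ℝ 1 G τc :=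
        contDiffAt_const.mul
          ((hI1cd.contDiffAt hOnhds).div (hFicd.contDiffAt hOnhds) hFiτc.ne')
      set V : ℝ × ℝ → ℝ × ℝ := fun q => (q.2, G q.1 * q.2 ^ 2) with hVdef
      have hVcd : ContDiffAt ℝ 1 V (τc, Lc) := by
        refine ContDiffAt.prodMk contDiff_snd.contDiffAt ?_
        have h1 : ContDiffAt ℝ 1 (G ∘ Prod.fst) (τc, Lc) :=
          ContDiffAt.comp (g := G) (f := Prod.fst) (τc, Lc) hGcd contDiff_fst.contDiffAt
        exact h1.mul (contDiff_snd.contDiffAt.pow 2)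
      obtain ⟨sol, hsolc, ε₀, hε₀, hsold⟩ :=
        hVcd.exists_forall_mem_closedBall_exists_eq_forall_mem_Ioo_hasDerivAt₀ c
      have hsolval : sol c = (τc, Lc) := hsolc
      have hsolcont : ContinuousAt (fun t => (sol t).1) c :=
        continuous_fst.continuousAt.comp (hsold c ⟨by linarith, by linarith⟩).continuousAt
      have hW : {t : ℝ | |(sol t).1 - τc| < ε₁} ∈ 𝓝 c := by
        have h1 : Metric.ball τc ε₁ ∈ 𝓝 ((fun t => (sol t).1) c) := by
          simp only [hsolval]
          exact ball_mem_nhds _ hε₁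
        have h2 := hsolcont.preimage_mem_nhds h1
        refine Filter.mem_of_superset h2 ?_
        intro t ht
        simpa [Real.dist_eq] using ht
      obtain ⟨η₂, hη₂, hball₂⟩ := Metric.mem_nhds_iff.1 hW
      set η : ℝ := min (η₂ / 2) (min (ε₀ / 2) (c / 2)) with hηdef
      have hη0 : 0 < η := lt_min (by linarith) (lt_min (by linarith) (by linarith))
      have hηη₂ : η < η₂ := lt_of_le_of_lt (min_le_left _ _) (by linarith)
      have hηε₀ : η < ε₀ :=
        lt_of_le_of_lt ((min_le_right _ _).trans (min_le_left _ _)) (by linarith)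
      have hηc : η < c :=
        lt_of_le_of_lt ((min_le_right _ _).trans (min_le_right _ _)) (by linarith)
      have hsolin : ∀ t ∈ Icc c (c + η), ∀ x, 0 < f x + (sol t).1 * ξ x := by
        intro t ht x
        have h1 : t ∈ Metric.ball c η₂ := by
          rw [Metric.mem_ball, Real.dist_eq, abs_lt]
          constructor <;> linarith [ht.1, ht.2]
        have h2 := hball₂ h1
        rw [mem_setOf_eq, abs_lt] at h2
        exact hpos₁ _ ⟨by linarith [h2.1], by linarith [h2.2]⟩ x
      set σ : ℝ → ℝ := fun t => if t < c then τ t else (sol t).1 with hσdef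
      set σ' : ℝ → ℝ := fun t => if t < c then τ' t else (sol t).2 with hσ'def
      set σ'' : ℝ → ℝ := fun t => G (σ t) * σ' t ^ 2 with hσ''def
      have hστ : ∀ t, t < c → σ t = τ t := fun t ht => if_pos ht
      have hσ'τ : ∀ t, t < c → σ' t = τ' t := fun t ht => if_pos ht
      have hσsol : ∀ t, ¬ t < c → σ t = (sol t).1 := fun t ht => if_neg ht
      have hσ'sol : ∀ t, ¬ t < c → σ' t = (sol t).2 := fun t ht => if_neg ht
      have hσc : σ c = τc := by rw [hσsol c (lt_irrefl c), hsolval]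
      have hσ'c : σ' c = Lc := by rw [hσ'sol c (lt_irrefl c), hsolval]
      have hdσ_lt : ∀ t ∈ Ioo 0 c, HasDerivAt σ (τ' t) t := by
        intro t ht
        refine (hdAτ t (hIooS ht) ht.1).congr_of_eventuallyEq ?_
        filter_upwards [Iio_mem_nhds ht.2] with s hs
        exact hστ s hs
      have hdσ'_lt : ∀ t ∈ Ioo 0 c, HasDerivAt σ' (τ'' t) t := by
        intro t ht
        refine (hdAτ' t (hIooS ht) ht.1).congr_of_eventuallyEq ?_
        filter_upwards [Iio_mem_nhds ht.2] with s hs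
        exact hσ'τ s hs
      have hmemIoo : ∀ t ∈ Ico c (c + η), t ∈ Ioo (c - ε₀) (c + ε₀) :=
        fun t ht => ⟨by linarith [ht.1], by linarith [ht.2, hηε₀]⟩
      have hdσ_gt : ∀ t ∈ Ioo c (c + η), HasDerivAt σ ((sol t).2) t := by
        intro t ht
        have h1 : HasDerivAt sol (V (sol t)) t := hsold t (hmemIoo t ⟨ht.1.le, ht.2⟩)
        have h2 : HasDerivAt (fun s => (sol s).1) ((V (sol t)).1) t :=
          (ContinuousLinearMap.fst ℝ ℝ ℝ).hasFDerivAt.comp_hasDerivAt t h1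
        refine HasDerivAt.congr_of_eventuallyEq h2 ?_
        filter_upwards [Ioi_mem_nhds ht.1] with s hs
        exact hσsol s (not_lt.2 hs.le)
      have hdσ'_gt : ∀ t ∈ Ioo c (c + η),
          HasDerivAt σ' (G ((sol t).1) * (sol t).2 ^ 2) t := by
        intro t ht
        have h1 : HasDerivAt sol (V (sol t)) t := hsold t (hmemIoo t ⟨ht.1.le, ht.2⟩)
        have h2 : HasDerivAt (fun s => (sol s).2) ((V (sol t)).2) t :=
          (ContinuousLinearMap.snd ℝ ℝ ℝ).hasFDerivAt.comp_hasDerivAt t h1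
        refine HasDerivAt.congr_of_eventuallyEq h2 ?_
        filter_upwards [Ioi_mem_nhds ht.1] with s hs
        exact hσ'sol s (not_lt.2 hs.le)
      have hIooc : Ioo (c - η) c ⊆ Ioo 0 c := fun s hs => ⟨by linarith [hs.1, hηc], hs.2⟩
      have hleft : HasDerivWithinAt σ Lc (Iic c) c := by
        refine hasDerivWithinAt_Iic_of_tendsto_deriv (s := Ioo (c - η) c) ?_ ?_ ?_ ?_
        · intro s hs
          exact (hdσ_lt s (hIooc hs)).differentiableAt.differentiableWithinAt
        · have h1 : Tendsto τ (𝓝[Ioo (c - η) c] c) (𝓝 τc) :=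
            htend.mono_left (nhdsWithin_mono c Ioo_subset_Iio_self)
          have h2 : Tendsto σ (𝓝[Ioo (c - η) c] c) (𝓝 τc) := by
            refine h1.congr' ?_
            filter_upwards [self_mem_nhdsWithin] with s hs
            exact (hστ s hs.2).symm
          rwa [ContinuousWithinAt, hσc]
        · exact Ioo_mem_nhdsLT (by linarith)
        · refine Tendsto.congr' ?_ htendτ'
          filter_upwards [hIooev] with s hs
          exact ((hdσ_lt s hs).deriv).symm
      have hright : HasDerivWithinAt σ Lc (Ici c) c := by
        have h1 : HasDerivAt sol (V (sol c)) c := hsold c ⟨by linarith, by linarith⟩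
        have h2 : HasDerivAt (fun s => (sol s).1) ((V (sol c)).1) c :=
          (ContinuousLinearMap.fst ℝ ℝ ℝ).hasFDerivAt.comp_hasDerivAt c h1
        have h3 : (V (sol c)).1 = Lc := by rw [hsolval]
        rw [h3] at h2
        exact h2.hasDerivWithinAt.congr (fun s hs => hσsol s (not_lt.2 hs))
          (hσsol c (lt_irrefl c))
      have hseam : HasDerivAt σ Lc c := by
        have h := hleft.union hright
        rw [Iic_union_Ici, hasDerivWithinAt_univ] at h
        exact h
      have hleft' : HasDerivWithinAt σ' Ac (Iic c) c := by
        refine hasDerivWithinAt_Iic_of_tendsto_deriv (s := Ioo (c - η) c) ?_ ?_ ?_ ?_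
        · intro s hs
          exact (hdσ'_lt s (hIooc hs)).differentiableAt.differentiableWithinAt
        · have h1 : Tendsto τ' (𝓝[Ioo (c - η) c] c) (𝓝 Lc) :=
            htendτ'.mono_left (nhdsWithin_mono c Ioo_subset_Iio_self)
          have h2 : Tendsto σ' (𝓝[Ioo (c - η) c] c) (𝓝 Lc) := by
            refine h1.congr' ?_
            filter_upwards [self_mem_nhdsWithin] with s hs
            exact (hσ'τ s hs.2).symm
          rwa [ContinuousWithinAt, hσ'c]
        · exact Ioo_mem_nhdsLT (by linarith)
        · refine Tendsto.congr' ?_ htendτ''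
          filter_upwards [hIooev] with s hs
          exact ((hdσ'_lt s hs).deriv).symm
      have hright' : HasDerivWithinAt σ' Ac (Ici c) c := by
        have h1 : HasDerivAt sol (V (sol c)) c := hsold c ⟨by linarith, by linarith⟩
        have h2 : HasDerivAt (fun s => (sol s).2) ((V (sol c)).2) c :=
          (ContinuousLinearMap.snd ℝ ℝ ℝ).hasFDerivAt.comp_hasDerivAt c h1
        have h3 : (V (sol c)).2 = Ac := by rw [hsolval]
        rw [h3] at h2
        exact h2.hasDerivWithinAt.congr (fun s hs => hσ'sol s (not_lt.2 hs))
          (hσ'sol c (lt_irrefl c))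
      have hseam' : HasDerivAt σ' Ac c := by
        have h := hleft'.union hright'
        rw [Iic_union_Ici, hasDerivWithinAt_univ] at h
        exact h
      set b₂ : ENNReal := ENNReal.ofReal (c + η) with hb₂def
      set S₂ : Set ℝ := {s : ℝ | 0 ≤ s ∧ ENNReal.ofReal s < b₂} with hS₂def
      have hS₂Ico : S₂ = Ico 0 (c + η) := by
        ext s
        constructor
        · intro hs
          refine ⟨hs.1, ?_⟩
          have h := hs.2
          rwa [hb₂def, ENNReal.ofReal_lt_ofReal_iff_of_nonneg hs.1] at h
        · intro hs
          refine ⟨hs.1, ?_⟩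
          rw [hb₂def, ENNReal.ofReal_lt_ofReal_iff_of_nonneg hs.1]
          exact hs.2
      have hSsub : S = S₂ ∩ Iio c := by
        rw [hSIco, hS₂Ico]
        ext s
        exact ⟨fun hs => ⟨⟨hs.1, by linarith [hs.2]⟩, hs.2⟩, fun hs => ⟨hs.1.1, hs.2⟩⟩
      have hpos₂ : ∀ t ∈ S₂, ∀ x, 0 < f x + σ t * ξ x := by
        intro t ht x
        rw [hS₂Ico] at ht
        rcases lt_or_ge t c with h | h
        · rw [hστ t h]
          exact hτpos' t (by rw [hSIco]; exact ⟨ht.1, h⟩) x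
        · rw [hσsol t (not_lt.2 h)]
          exact hsolin t ⟨h, ht.2.le⟩ x
      have hnhdsS₂0 : S ∈ 𝓝[S₂] (0 : ℝ) := by
        rw [hSsub]
        exact inter_mem_nhdsWithin S₂ (Iio_mem_nhds hc)
      have hdσS₂ : ∀ t ∈ S₂, HasDerivWithinAt σ (σ' t) S₂ t := by
        intro t ht
        rw [hS₂Ico] at ht
        rcases lt_trichotomy t c with h | h | h
        · rcases eq_or_lt_of_le ht.1 with rfl | h0
          · have h1 : HasDerivWithinAt σ (τ' 0) S 0 := by
              refine (hdτ 0 h0S).congr (fun s hs => hστ s ?_) (hστ 0 hc)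
              rw [hSIco] at hs
              exact hs.2
            rw [hσ'τ 0 hc]
            exact h1.mono_of_mem_nhdsWithin hnhdsS₂0
          · rw [hσ'τ t h]
            exact (hdσ_lt t ⟨h0, h⟩).hasDerivWithinAt
        · subst h
          rw [hσ'c]
          exact hseam.hasDerivWithinAt
        · rw [hσ'sol t (not_lt.2 h.le)]
          exact (hdσ_gt t ⟨h, ht.2⟩).hasDerivWithinAt
      have hdσ'S₂ : ∀ t ∈ S₂, HasDerivWithinAt σ' (σ'' t) S₂ t := by
        intro t ht
        rw [hS₂Ico] at ht
        rcases lt_trichotomy t c with h | h | h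
        · have htS : t ∈ S := by rw [hSIco]; exact ⟨ht.1, h⟩
          have hσ''τ : σ'' t = τ'' t := by
            have he : σ'' t = G (σ t) * σ' t ^ 2 := rfl
            rw [he, hστ t h, hσ'τ t h, ← hode' t htS]
          rcases eq_or_lt_of_le ht.1 with rfl | h0
          · have h1 : HasDerivWithinAt σ' (τ'' 0) S 0 := by
              refine (hdτ' 0 h0S).congr (fun s hs => hσ'τ s ?_) (hσ'τ 0 hc)
              rw [hSIco] at hs
              exact hs.2
            rw [hσ''τ]
            exact h1.mono_of_mem_nhdsWithin hnhdsS₂0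
          · rw [hσ''τ]
            exact (hdσ'_lt t ⟨h0, h⟩).hasDerivWithinAt
        · subst h
          have he : σ'' c = Ac := by
            have he2 : σ'' c = G (σ c) * σ' c ^ 2 := rfl
            rw [he2, hσc, hσ'c]
          rw [he]
          exact hseam'.hasDerivWithinAt
        · have he : σ'' t = G ((sol t).1) * (sol t).2 ^ 2 := by
            have he2 : σ'' t = G (σ t) * σ' t ^ 2 := rfl
            rw [he2, hσsol t (not_lt.2 h.le), hσ'sol t (not_lt.2 h.le)]
          rw [he]
          exact (hdσ'_gt t ⟨h, ht.2⟩).hasDerivWithinAt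
      have hcσ : ContinuousOn σ S₂ := fun t ht => (hdσS₂ t ht).continuousWithinAt
      have hcσ' : ContinuousOn σ' S₂ := fun t ht => (hdσ'S₂ t ht).continuousWithinAt
      have hcσ'' : ContinuousOn σ'' S₂ := by
        intro t ht
        have hp := hpos₂ t ht
        have h1 : ContinuousAt G (σ t) :=
          continuousAt_const.mul (((hI1d _ hp).continuousAt).div
            ((hFid _ hp).continuousAt) (hFipos _ hp).ne')
        have h2 : ContinuousWithinAt (fun s => G (σ s)) S₂ t :=
          h1.comp_continuousWithinAt (hcσ t ht)
        exact h2.mul ((hcσ' t ht).pow 2)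
      have hproj : IsProjSolution β lam f ξ σ σ' σ'' b₂ := by
        refine ⟨?_, ?_, ?_, ?_, ?_, ?_, ?_⟩
        · rw [hστ 0 hc, hτ0]
        · rw [hσ'τ 0 hc, hτ'0]
        · exact hdσS₂
        · exact hdσ'S₂
        · exact hcσ''
        · intro t h0 hlt
          exact hpos₂ t ⟨h0, hlt⟩
        · intro t h0 hlt
          have he : σ'' t = G (σ t) * σ' t ^ 2 := rfl
          rw [he]
      have hagree : ∀ t : ℝ, 0 ≤ t → ENNReal.ofReal t < b → σ t = τ t := by
        intro t h0 hlt
        exact hστ t ((ENNReal.ofReal_lt_iff_lt_toReal h0 hbtop).1 hlt)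
      have hle := hmax σ σ' σ'' b₂ hproj hagree
      have hble : b = ENNReal.ofReal c := (ENNReal.ofReal_toReal hbtop).symm
      rw [hble, hb₂def] at hle
      have hfin := (ENNReal.ofReal_le_ofReal_iff hc.le).1 hle
      exact lt_irrefl c (lt_of_lt_of_le (lt_add_of_pos_right c hη0) hfin)
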